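/- Define f : ℂ → ℂ by f(z) = 2^{-(m+1)} h(2^m z) when Im z ∈ (2^{-(m+1)}, 2^{-m}] for m ∈ ℤ, and f(x+iy) = 2x + iy/2 when y ≤ 0. Then f is well-defined and continuous on ℂ, and Im(f(z)) = (Im z)/2 for all z ∈ ℂ. -/

import Mathlib

open Set Complex Filter

/-- The slice function `h_y`. -/
noncomputable def hy (y x : ℝ) : ℝ :=
  if |x| + |y - 3/4| < 1/4 then 1
  else if y ≤ |x| then 4
  else if y ≤ 3/4 then 6 * |x| - 6 * y + 4
  else (3 * |x| + 5 * y - 4) / (2 * y - 1)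

/-- The map `h(x + iy) = h_y(x)·x + iy`. -/
noncomputable def hmap (z : ℂ) : ℂ := ⟨hy z.im z.re * z.re, z.im⟩

/-- For `y > 0`, the unique integer `m` with `2^{-(m+1)} < y ≤ 2^{-m}`. -/
noncomputable def mval (y : ℝ) : ℤ := ⌊Real.logb 2 y⁻¹⌋

/-- The map `f`: equal to `2^{-(m+1)} h(2^m z)` when `Im z ∈ (2^{-(m+1)}, 2^{-m}]`,
and to `2x + iy/2` when `Im z ≤ 0`. -/
noncomputable def f (z : ℂ) : ℂ :=
  if z.im ≤ 0 then ⟨2 * z.re, z.im / 2⟩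
  else (2 : ℂ) ^ (-(mval z.im + 1)) * hmap ((2 : ℂ) ^ (mval z.im) * z)

lemma mval_spec {y : ℝ} (h0 : 0 < y) :
    (2:ℝ)^(-(mval y + 1)) < y ∧ y ≤ (2:ℝ)^(-(mval y)) := by
  have h1 : (0:ℝ) < y⁻¹ := by positivity
  have hl : ((mval y : ℝ)) ≤ Real.logb 2 y⁻¹ := Int.floor_le _
  have hu : Real.logb 2 y⁻¹ < (mval y : ℝ) + 1 := Int.lt_floor_add_one _
  have hre : (2:ℝ) ^ (Real.logb 2 y⁻¹) = y⁻¹ := Real.rpow_logb two_pos (by norm_num) h1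
  have hle : (2:ℝ) ^ (mval y) ≤ y⁻¹ := by
    rw [← hre, ← Real.rpow_intCast 2 (mval y)]
    exact (Real.rpow_le_rpow_left_iff (x := 2) one_lt_two).mpr hl
  have hlt : y⁻¹ < (2:ℝ) ^ (mval y + 1) := by
    rw [← hre, ← Real.rpow_intCast 2 (mval y + 1)]
    refine Real.rpow_lt_rpow_left_iff one_lt_two |>.mpr ?_
    push_cast; exact hu
  have hp1 : (0:ℝ) < (2:ℝ)^(mval y) := zpow_pos two_pos _
  have hp2 : (0:ℝ) < (2:ℝ)^(mval y + 1) := zpow_pos two_pos _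
  constructor
  · rw [zpow_neg]
    rw [inv_lt_iff_one_lt_mul₀ hp2]
    rw [inv_lt_iff_one_lt_mul₀' h0] at hlt
    linarith [hlt]
  · rw [zpow_neg, le_inv_comm₀ h0 hp1]
    exact hle

lemma mval_eq {y : ℝ} {m : ℤ} (h : y ∈ Ioc ((2:ℝ)^(-(m+1))) ((2:ℝ)^(-m))) : mval y = m := by
  have h0 : 0 < y := lt_trans (zpow_pos two_pos _) h.1
  obtain ⟨h1, h2⟩ := mval_spec h0
  by_contra hne
  rcases lt_or_gt_of_ne hne with hlt | hlt
  · have : (2:ℝ)^(-m) ≤ (2:ℝ)^(-(mval y + 1)) :=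
      zpow_le_zpow_right₀ one_le_two (by omega)
    linarith [h.2]
  · have : (2:ℝ)^(-(mval y)) ≤ (2:ℝ)^(-(m+1)) :=
      zpow_le_zpow_right₀ one_le_two (by omega)
    linarith [h.1]

lemma scaled_mem {y : ℝ} (h0 : 0 < y) :
    1/2 < (2:ℝ)^(mval y) * y ∧ (2:ℝ)^(mval y) * y ≤ 1 := by
  obtain ⟨h1, h2⟩ := mval_spec h0
  have hp : (0:ℝ) < (2:ℝ)^(mval y) := zpow_pos two_pos _
  have e1 : (2:ℝ)^(mval y) * (2:ℝ)^(-(mval y + 1)) = 1/2 := by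
    rw [← zpow_add₀ (two_ne_zero), show mval y + -(mval y + 1) = -1 by ring]
    norm_num
  have e2 : (2:ℝ)^(mval y) * (2:ℝ)^(-(mval y)) = 1 := by
    rw [← zpow_add₀ (two_ne_zero), show mval y + -(mval y) = 0 by ring]
    norm_num
  constructor
  · calc (1:ℝ)/2 = (2:ℝ)^(mval y) * (2:ℝ)^(-(mval y + 1)) := e1.symm
      _ < (2:ℝ)^(mval y) * y := by exact (mul_lt_mul_iff_right₀ hp).mpr h1
  · calc (2:ℝ)^(mval y) * y ≤ (2:ℝ)^(mval y) * (2:ℝ)^(-(mval y)) :=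
        (mul_le_mul_iff_right₀ hp).mpr h2
      _ = 1 := e2

lemma hy_of_le {y x : ℝ} (h12 : 1/2 < y) (h : y ≤ |x|) : hy y x = 4 := by
  have hax : (1:ℝ)/2 < |x| := lt_of_lt_of_le h12 h
  rw [hy, if_neg (by push_neg; linarith [abs_nonneg (y - 3/4)]), if_pos h]

lemma hy_half (t : ℝ) : hy (1/2) t = hy 1 (2*t) := by
  have ha : |2*t| = 2 * |t| := by rw [abs_mul]; norm_num
  have h14 : |(1:ℝ)/2 - 3/4| = 1/4 := by rw [abs_of_nonpos (by norm_num)]; norm_num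
  have h34 : |(1:ℝ) - 3/4| = 1/4 := by rw [_root_.abs_of_nonneg (by norm_num : (0:ℝ) ≤ 1 - 3/4)]; norm_num
  have hat := abs_nonneg t
  rw [hy, hy, ha, h14, h34,
    if_neg (not_lt.mpr (by linarith)), if_neg (not_lt.mpr (by linarith))]
  by_cases h : 1/2 ≤ |t|
  · rw [if_pos h, if_pos (by linarith : (1:ℝ) ≤ 2 * |t|)]
  · push_neg at h
    rw [if_neg (not_le.mpr (by linarith)), if_neg (not_le.mpr (by linarith : 2*|t| < 1)),
      if_pos (by norm_num : (1:ℝ)/2 ≤ 3/4), if_neg (by norm_num : ¬ (1:ℝ) ≤ 3/4)]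
    field_simp
    ring

lemma hy_bound {y x : ℝ} (h1 : 1/2 < y) (h2 : y ≤ 1) : |hy y x| ≤ 4 := by
  rw [hy]
  split_ifs with hd hle h34
  · rw [_root_.abs_of_nonneg (by norm_num : (0:ℝ) ≤ 1)]; norm_num
  · rw [_root_.abs_of_nonneg (by norm_num : (0:ℝ) ≤ 4)]
  · push_neg at hle
    have := abs_nonneg x
    rw [abs_le]; constructor <;> nlinarith
  · push_neg at hle h34
    have hax := abs_nonneg x
    have hden : (0:ℝ) < 2*y - 1 := by linarith
    rw [abs_le, div_le_iff₀ hden, le_div_iff₀ hden]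
    constructor <;> nlinarith

/-- Real coordinate version of `f`'s first coordinate. -/
noncomputable def Ffun (p : ℝ × ℝ) : ℝ :=
  if p.2 ≤ 0 then 2 * p.1
  else p.1 / 2 * hy ((2:ℝ)^(mval p.2) * p.2) ((2:ℝ)^(mval p.2) * p.1)

lemma glueAt {F u v : ℝ × ℝ → ℝ} {p₀ : ℝ × ℝ} (hu : Continuous u) (hv : Continuous v)
    (huv : u p₀ = v p₀) (h : ∀ᶠ p in nhds p₀, F p = u p ∨ F p = v p) :
    ContinuousAt F p₀ := by
  have hF0 : F p₀ = u p₀ := by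
    rcases h.self_of_nhds with h' | h'
    · exact h'
    · rw [h', ← huv]
  rw [ContinuousAt, hF0, tendsto_iff_dist_tendsto_zero]
  refine squeeze_zero' (g := fun p => dist (u p) (u p₀) + dist (v p) (v p₀))
    (Filter.Eventually.of_forall fun p => dist_nonneg) (h.mono ?_) ?_
  · intro p hp
    rcases hp with h' | h'
    · rw [h']
      exact le_add_of_le_of_nonneg le_rfl dist_nonneg
    · rw [h', huv]
      exact le_add_of_nonneg_of_le dist_nonneg le_rfl
  · have := ((hu.tendsto p₀).dist (tendsto_const_nhds (x := u p₀))).add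
      ((hv.tendsto p₀).dist (tendsto_const_nhds (x := v p₀)))
    simpa using this

lemma hy_cont : Continuous (fun p : ℝ × ℝ => hy p.1 p.2) := by
  have cy : Continuous (fun p : ℝ × ℝ => p.1) := continuous_fst
  have cx : Continuous (fun p : ℝ × ℝ => |p.2|) := continuous_snd.abs
  -- innermost
  have hB : Continuous (fun p : ℝ × ℝ =>
      if p.1 ≤ 3/4 then 6 * |p.2| - 6 * p.1 + 4 else (3 * |p.2| + 5 * p.1 - 4) / (2 * p.1 - 1)) := by
    rw [← continuousOn_univ]
    apply ContinuousOn.if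
    · rintro p ⟨-, hp⟩
      have h34 : p.1 = 3/4 := frontier_le_subset_eq cy continuous_const hp
      rw [h34]; norm_num; ring
    · exact ((continuous_const.mul cx).sub (continuous_const.mul cy)).add continuous_const |>.continuousOn
    · apply ContinuousOn.div
      · exact (((continuous_const.mul cx).add (continuous_const.mul cy)).sub continuous_const).continuousOn
      · exact ((continuous_const.mul cy).sub continuous_const).continuousOn
      · rintro p ⟨-, hp⟩
        have : (3:ℝ)/4 ≤ p.1 := by
          have : closure {a : ℝ × ℝ | ¬ a.1 ≤ 3/4} ⊆ {a : ℝ × ℝ | 3/4 ≤ a.1} := by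
            apply closure_minimal
            · intro a ha; exact le_of_lt (not_le.mp ha)
            · exact isClosed_le continuous_const cy
          exact this hp
        intro h; rw [sub_eq_zero] at h; linarith
  -- middle
  have hA : Continuous (fun p : ℝ × ℝ =>
      if p.1 ≤ |p.2| then (4:ℝ) else
      if p.1 ≤ 3/4 then 6 * |p.2| - 6 * p.1 + 4 else (3 * |p.2| + 5 * p.1 - 4) / (2 * p.1 - 1)) := by
    rw [← continuousOn_univ]
    apply ContinuousOn.if
    · rintro p ⟨-, hp⟩
      have he : p.1 = |p.2| := frontier_le_subset_eq cy cx hp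
      by_cases h34 : p.1 ≤ 3/4
      · rw [if_pos h34, ← he]; ring
      · rw [if_neg h34, ← he]
        push_neg at h34
        have hne : 2 * p.1 - 1 ≠ 0 := by intro h; nlinarith
        rw [eq_div_iff hne]; ring
    · exact continuousOn_const
    · exact hB.continuousOn
  -- outer
  rw [show (fun p : ℝ × ℝ => hy p.1 p.2) = (fun p : ℝ × ℝ =>
      if |p.2| + |p.1 - 3/4| < 1/4 then (1:ℝ) else
      if p.1 ≤ |p.2| then (4:ℝ) else
      if p.1 ≤ 3/4 then 6 * |p.2| - 6 * p.1 + 4 else (3 * |p.2| + 5 * p.1 - 4) / (2 * p.1 - 1))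
    from rfl]
  rw [← continuousOn_univ]
  apply ContinuousOn.if
  · rintro p ⟨-, hp⟩
    have he : |p.2| + |p.1 - 3/4| = 1/4 :=
      frontier_lt_subset_eq (cx.add (cy.sub continuous_const).abs) continuous_const hp
    have hax : (0:ℝ) ≤ |p.2| := abs_nonneg _
    have hay : (0:ℝ) ≤ |p.1 - 3/4| := abs_nonneg _
    have hy12 : (1:ℝ)/2 ≤ p.1 := by
      cases abs_cases (p.1 - 3/4) with
      | inl h => linarith [h.1]
      | inr h => linarith [h.1]
    have hnx : ¬ p.1 ≤ |p.2| := by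
      intro h; linarith
    rw [if_neg hnx]
    by_cases h34 : p.1 ≤ 3/4
    · rw [if_pos h34]
      have : |p.1 - 3/4| = 3/4 - p.1 := by rw [abs_of_nonpos (by linarith)]; ring
      rw [this] at he
      have : |p.2| = p.1 - 1/2 := by linarith
      rw [this]; ring
    · rw [if_neg h34]
      push_neg at h34
      have : |p.1 - 3/4| = p.1 - 3/4 := abs_of_nonneg (by linarith)
      rw [this] at he
      have hx1 : |p.2| = 1 - p.1 := by linarith
      have hne : 2 * p.1 - 1 ≠ 0 := by intro h; nlinarith
      rw [hx1, eq_div_iff hne]; ring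
  · exact continuousOn_const
  · exact hA.continuousOn

/-- The scaled branch functions. -/
noncomputable def uf (m : ℤ) (p : ℝ × ℝ) : ℝ :=
  p.1 / 2 * hy ((2:ℝ)^m * p.2) ((2:ℝ)^m * p.1)

lemma uf_cont (m : ℤ) : Continuous (uf m) := by
  apply Continuous.mul
  · exact continuous_fst.div_const 2
  · exact hy_cont.comp ((continuous_const.mul continuous_snd).prodMk
      (continuous_const.mul continuous_fst))

lemma Ffun_eq_on_strip {m : ℤ} {p : ℝ × ℝ}
    (h : p.2 ∈ Ioc ((2:ℝ)^(-(m+1))) ((2:ℝ)^(-m))) : Ffun p = uf m p := by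
  have h0 : 0 < p.2 := lt_trans (zpow_pos two_pos _) h.1
  rw [Ffun, if_neg (not_le.mpr h0), mval_eq h, uf]

lemma Ffun_cont : Continuous Ffun := by
  rw [continuous_iff_continuousAt]
  intro p₀
  rcases lt_trichotomy p₀.2 0 with hneg | hzero | hpos
  · have hev : Ffun =ᶠ[nhds p₀] (fun p : ℝ × ℝ => 2 * p.1) := by
      have hopen : IsOpen {p : ℝ × ℝ | p.2 < 0} := isOpen_lt continuous_snd continuous_const
      filter_upwards [hopen.mem_nhds hneg] with p hp
      exact if_pos (le_of_lt hp)
    exact ((continuous_const.mul continuous_fst).continuousAt).congr hev.symm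
  · by_cases hx : p₀.1 = 0
    · have hF0 : Ffun p₀ = 0 := by rw [Ffun, if_pos (le_of_eq hzero), hx, mul_zero]
      rw [ContinuousAt, hF0]
      have hbound : ∀ p : ℝ × ℝ, |Ffun p| ≤ 2 * |p.1| := by
        intro p
        rw [Ffun]
        split_ifs with h
        · rw [abs_mul, _root_.abs_two]
        · push_neg at h
          obtain ⟨hs1, hs2⟩ := scaled_mem h
          have hb := hy_bound (x := (2:ℝ)^(mval p.2) * p.1) hs1 hs2
          calc |p.1 / 2 * hy ((2:ℝ)^(mval p.2) * p.2) ((2:ℝ)^(mval p.2) * p.1)|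
              = |p.1| / 2 * |hy ((2:ℝ)^(mval p.2) * p.2) ((2:ℝ)^(mval p.2) * p.1)| := by
                rw [abs_mul, abs_div, _root_.abs_two]
            _ ≤ |p.1| / 2 * 4 := mul_le_mul_of_nonneg_left hb (by positivity)
            _ = 2 * |p.1| := by ring
      refine squeeze_zero_norm (a := fun p : ℝ × ℝ => 2 * |p.1|) ?_ ?_
      · intro p; rw [Real.norm_eq_abs]; exact hbound p
      · have hc : Continuous (fun p : ℝ × ℝ => 2 * |p.1|) :=
          continuous_const.mul continuous_fst.abs
        have := hc.tendsto p₀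
        simpa [hx] using this
    · have hO : IsOpen {p : ℝ × ℝ | |p.1 - p₀.1| < |p₀.1|/2 ∧ |p.2| < |p₀.1|/2} :=
        (isOpen_lt (continuous_fst.sub continuous_const).abs continuous_const).inter
          (isOpen_lt continuous_snd.abs continuous_const)
      have hmem : p₀ ∈ {p : ℝ × ℝ | |p.1 - p₀.1| < |p₀.1|/2 ∧ |p.2| < |p₀.1|/2} := by
        constructor <;> simp [hzero, sub_self, abs_pos.mpr hx] <;> positivity
      have hev : Ffun =ᶠ[nhds p₀] (fun p : ℝ × ℝ => 2 * p.1) := by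
        filter_upwards [hO.mem_nhds hmem] with p hp
        obtain ⟨hp1, hp2⟩ := hp
        by_cases h : p.2 ≤ 0
        · exact if_pos h
        · push_neg at h
          rw [Ffun, if_neg (not_le.mpr h)]
          have hx1 : |p₀.1|/2 < |p.1| := by
            have h3 : |p₀.1| - |p.1| ≤ |p₀.1 - p.1| := abs_sub_abs_le_abs_sub _ _
            rw [abs_sub_comm] at h3
            linarith
          have hyx : p.2 ≤ |p.1| := le_trans (le_abs_self p.2) (le_of_lt (lt_trans hp2 hx1))
          obtain ⟨hs1, hs2⟩ := scaled_mem h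
          have hppos : (0:ℝ) < (2:ℝ)^(mval p.2) := zpow_pos two_pos _
          have hcmp : (2:ℝ)^(mval p.2) * p.2 ≤ |(2:ℝ)^(mval p.2) * p.1| := by
            rw [abs_mul, abs_of_pos hppos]
            exact mul_le_mul_of_nonneg_left hyx hppos.le
          rw [hy_of_le hs1 hcmp]
          ring
      exact ((continuous_const.mul continuous_fst).continuousAt).congr hev.symm
  · obtain ⟨h1, h2⟩ := mval_spec hpos
    rcases eq_or_lt_of_le h2 with heq | hlt
    · set m := mval p₀.2 with hm
      apply glueAt (uf_cont m) (uf_cont (m-1)) ?_ ?_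
      · have hppos : (0:ℝ) < (2:ℝ)^m := zpow_pos two_pos _
        have e1 : (2:ℝ)^m * p₀.2 = 1 := by
          rw [heq, ← zpow_add₀ (two_ne_zero), show m + -m = 0 by ring, zpow_zero]
        have e2 : (2:ℝ)^(m-1) * p₀.2 = 1/2 := by
          rw [heq, ← zpow_add₀ (two_ne_zero), show m - 1 + -m = -1 by ring]
          norm_num
        have e3 : 2 * ((2:ℝ)^(m-1) * p₀.1) = (2:ℝ)^m * p₀.1 := by
          have h4 : (2:ℝ)^m = (2:ℝ)^(m-1) * 2 := by
            rw [show m = m - 1 + 1 by ring, zpow_add_one₀ (two_ne_zero : (2:ℝ) ≠ 0)]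
            ring_nf
          rw [h4]; ring
        rw [uf, uf, e1, e2, ← e3, hy_half]
      · have hO : IsOpen {p : ℝ × ℝ | (2:ℝ)^(-(m+1)) < p.2 ∧ p.2 < (2:ℝ)^(-(m-1))} :=
          (isOpen_lt continuous_const continuous_snd).inter
            (isOpen_lt continuous_snd continuous_const)
        have hmem : p₀ ∈ {p : ℝ × ℝ | (2:ℝ)^(-(m+1)) < p.2 ∧ p.2 < (2:ℝ)^(-(m-1))} := by
          refine ⟨h1, ?_⟩
          rw [heq]
          exact zpow_lt_zpow_right₀ one_lt_two (by omega)
        filter_upwards [hO.mem_nhds hmem] with p hp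
        obtain ⟨ha, hb⟩ := hp
        by_cases hc : p.2 ≤ (2:ℝ)^(-m)
        · left; exact Ffun_eq_on_strip ⟨ha, hc⟩
        · right
          push_neg at hc
          refine Ffun_eq_on_strip (m := m-1) ⟨?_, le_of_lt hb⟩
          rw [show -(m-1+1) = -m by ring]
          exact hc
    · set m := mval p₀.2 with hm
      have hO : IsOpen {p : ℝ × ℝ | (2:ℝ)^(-(m+1)) < p.2 ∧ p.2 < (2:ℝ)^(-m)} :=
        (isOpen_lt continuous_const continuous_snd).inter
          (isOpen_lt continuous_snd continuous_const)
      have hev : Ffun =ᶠ[nhds p₀] uf m := by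
        filter_upwards [hO.mem_nhds ⟨h1, hlt⟩] with p hp
        exact Ffun_eq_on_strip ⟨hp.1, le_of_lt hp.2⟩
      exact ((uf_cont m).continuousAt).congr hev.symm

lemma two_zpow_complex (k : ℤ) : (2:ℂ)^k = (((2:ℝ)^k : ℝ) : ℂ) := by
  push_cast
  ring

lemma f_eq (z : ℂ) : f z = ⟨Ffun (z.re, z.im), z.im / 2⟩ := by
  by_cases h : z.im ≤ 0
  · rw [f, if_pos h, Ffun, if_pos h]
  · push_neg at h
    rw [f, if_neg (not_le.mpr h), Ffun]
    simp only [not_le.mpr h, if_false]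
    set m := mval z.im with hm
    rw [two_zpow_complex, two_zpow_complex, hmap]
    have key : (2:ℝ)^(-(m+1)) * (2:ℝ)^m = 1/2 := by
      rw [← zpow_add₀ (two_ne_zero), show -(m+1) + m = -1 by ring]
      norm_num
    apply Complex.ext <;>
      simp only [Complex.re_ofReal_mul, Complex.im_ofReal_mul]
    · linear_combination z.re * hy ((2:ℝ)^m * z.im) ((2:ℝ)^m * z.re) * key
    · linear_combination z.im * key

theorem stmt5 :
    -- f is well defined: it satisfies the defining piecewise description
    (∀ (m : ℤ) (z : ℂ), z.im ∈ Ioc ((2:ℝ) ^ (-(m+1))) ((2:ℝ) ^ (-m)) →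
        f z = (2 : ℂ) ^ (-(m+1)) * hmap ((2 : ℂ) ^ m * z)) ∧
    (∀ z : ℂ, z.im ≤ 0 → f z = ⟨2 * z.re, z.im / 2⟩) ∧
    Continuous f ∧
    (∀ z : ℂ, (f z).im = z.im / 2) := by
  refine ⟨?_, ?_, ?_, ?_⟩
  · intro m z hz
    have him : 0 < z.im := lt_trans (zpow_pos two_pos _) hz.1
    rw [f, if_neg (not_le.mpr him), mval_eq hz]
  · intro z h
    rw [f, if_pos h]
  · have hrepr : f = fun z => (((Ffun (z.re, z.im) : ℝ) : ℂ) + ((z.im / 2 : ℝ) : ℂ) * I) := by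
      funext z
      rw [f_eq]
      apply Complex.ext <;> simp
    rw [hrepr]
    apply Continuous.add
    · exact Complex.continuous_ofReal.comp (Ffun_cont.comp (continuous_re.prodMk continuous_im))
    · exact (Complex.continuous_ofReal.comp (continuous_im.div_const 2)).mul continuous_const
  · intro z
    rw [f_eq]
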